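/- Fix an odd integer n ≥ 5. Let C_n := [cos((i−j)π/n)]_{0≤i,j≤n−1} and C_{n,ε} := C_n + ε I_n. Then there exists ε_0 > 0 such that for every 0 < ε < ε_0 there exists δ > 0 with the property: for every even integer k with 2 ≤ k ≤ n−3 and every real α ∈ [k−δ, k+δ], the matrix |C_{n,ε}|_∘^{∘α} := [|(C_{n,ε})_{ij}|^α] is positive semi-definite. -/

import Mathlib

/-- The `α`th entrywise absolute power `[|a_ij|^α]` of a real matrix, using the real
power function `Real.rpow` (so that `0 ^ 0 = 1`). -/
noncomputable def absHadamardPower {n : ℕ} (A : Matrix (Fin n) (Fin n) ℝ) (α : ℝ) :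
    Matrix (Fin n) (Fin n) ℝ :=
  Matrix.of fun i j => |A i j| ^ α

open Matrix Finset Real


lemma gram_nonneg {n : ℕ} (k : ℕ) (a b x : Fin n → ℝ) :
    0 ≤ ∑ i, ∑ j, x i * x j * (a i * a j + b i * b j) ^ k := by
  have key : ∀ i j : Fin n, x i * x j * (a i * a j + b i * b j) ^ k
      = ∑ m ∈ Finset.range (k+1),
          ((k.choose m : ℝ)) * ((x i * a i ^ m * b i ^ (k - m)) * (x j * a j ^ m * b j ^ (k - m))) := by
    intro i j
    rw [add_pow, Finset.mul_sum]
    refine Finset.sum_congr rfl fun m _ => ?_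
    rw [mul_pow, mul_pow]; ring
  simp only [key]
  have swap : (∑ i : Fin n, ∑ j : Fin n, ∑ m ∈ Finset.range (k+1),
      ((k.choose m : ℝ)) * ((x i * a i ^ m * b i ^ (k - m)) * (x j * a j ^ m * b j ^ (k - m))))
      = ∑ m ∈ Finset.range (k+1), ∑ i : Fin n, ∑ j : Fin n,
      ((k.choose m : ℝ)) * ((x i * a i ^ m * b i ^ (k - m)) * (x j * a j ^ m * b j ^ (k - m))) :=
    calc (∑ i : Fin n, ∑ j : Fin n, ∑ m ∈ Finset.range (k+1),
        ((k.choose m : ℝ)) * ((x i * a i ^ m * b i ^ (k - m)) * (x j * a j ^ m * b j ^ (k - m))))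
        = ∑ i : Fin n, ∑ m ∈ Finset.range (k+1), ∑ j : Fin n,
          ((k.choose m : ℝ)) * ((x i * a i ^ m * b i ^ (k - m)) * (x j * a j ^ m * b j ^ (k - m))) :=
        Finset.sum_congr rfl fun i _ => Finset.sum_comm
      _ = _ := Finset.sum_comm
  rw [swap]
  refine Finset.sum_nonneg fun m _ => ?_
  have h2 : ∑ i : Fin n, ∑ j : Fin n,
      ((k.choose m : ℝ)) * ((x i * a i ^ m * b i ^ (k - m)) * (x j * a j ^ m * b j ^ (k - m)))
      = (k.choose m : ℝ) * (∑ i : Fin n, x i * a i ^ m * b i ^ (k - m)) ^ 2 := by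
    rw [sq, Finset.sum_mul_sum, Finset.mul_sum]
    exact Finset.sum_congr rfl fun i _ => by rw [Finset.mul_sum]
  rw [h2]
  positivity

/-- entry cosines -/
noncomputable def cosEntry (n : ℕ) (i j : Fin n) : ℝ :=
  Real.cos (((i : ℝ) - (j : ℝ)) * Real.pi / (n : ℝ))

/-- sum of off-diagonal deviations -/
noncomputable def Foff (n k : ℕ) (α : ℝ) : ℝ :=
  ∑ i : Fin n, ∑ j ∈ Finset.univ.erase i, abs (|cosEntry n i j| ^ α - cosEntry n i j ^ k)

lemma Foff_nonneg (n k : ℕ) (α : ℝ) : 0 ≤ Foff n k α :=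
  Finset.sum_nonneg fun i _ => Finset.sum_nonneg fun j _ => abs_nonneg _

lemma Foff_continuousAt (n k : ℕ) (hk : k ≠ 0) : ContinuousAt (Foff n k) (k : ℝ) := by
  unfold Foff ContinuousAt
  refine tendsto_finset_sum _ fun i _ => tendsto_finset_sum _ fun j _ => ?_
  have hb : ContinuousAt (fun α : ℝ => |cosEntry n i j| ^ α) (k : ℝ) := by
    rcases eq_or_ne (|cosEntry n i j|) 0 with h | h
    · exact Real.continuousAt_const_rpow' (by exact_mod_cast hk)
    · exact Real.continuousAt_const_rpow h
  exact ((hb.sub continuousAt_const).abs)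

lemma Foff_at_even (n k : ℕ) (hk : Even k) : Foff n k (k : ℝ) = 0 := by
  unfold Foff
  refine Finset.sum_eq_zero fun i _ => Finset.sum_eq_zero fun j _ => ?_
  rw [Real.rpow_natCast, hk.pow_abs, sub_self, abs_zero]


/-- For odd `n ≥ 5` and `C_{n,ε} = [cos((i-j)π/n)] + ε I_n` with `ε > 0` small
enough, there is `δ > 0` such that for every even integer `k` with `2 ≤ k ≤ n-3` and
every `α ∈ [k-δ, k+δ]`, the matrix `[|(C_{n,ε})_{ij}|^α]` is positive semi-definite. -/
theorem abs_hadamard_power_cos_psd_near_even_integers_odd_case (n : ℕ) (hn : 5 ≤ n)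
    (hno : Odd n) :
    ∃ ε₀ > (0 : ℝ), ∀ ε : ℝ, 0 < ε → ε < ε₀ →
      ∃ δ > (0 : ℝ), ∀ k : ℕ, Even k → 2 ≤ k → k + 3 ≤ n →
        ∀ α : ℝ, (k : ℝ) - δ ≤ α → α ≤ (k : ℝ) + δ →
          (absHadamardPower
            (Matrix.of fun i j : Fin n =>
              Real.cos (((i : ℝ) - (j : ℝ)) * Real.pi / (n : ℝ)) +
                (if i = j then ε else 0))
            α).PosSemidef := by
  refine ⟨1, one_pos, fun ε hε hε1 => ?_⟩
  -- choose δ for each k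
  have H : ∀ k : ℕ, ∃ δ : ℝ, 0 < δ ∧ δ ≤ 1 ∧
      (Even k → 2 ≤ k → ∀ α : ℝ, |α - (k : ℝ)| ≤ δ → Foff n k α ≤ ε) := by
    intro k
    by_cases hk : Even k ∧ 2 ≤ k
    · obtain ⟨hke, hk2⟩ := hk
      have hcont := Foff_continuousAt n k (by omega)
      rw [Metric.continuousAt_iff] at hcont
      obtain ⟨δ', hδ', hprop⟩ := hcont ε hε
      refine ⟨min (δ' / 2) 1, by positivity, min_le_right _ _, fun _ _ α hα => ?_⟩
      have h1 : dist α (k : ℝ) < δ' := by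
        have : |α - (k : ℝ)| ≤ δ' / 2 := le_trans hα (min_le_left _ _)
        rw [Real.dist_eq]; linarith
      have h2 := hprop h1
      rw [Foff_at_even n k hke, Real.dist_eq, sub_zero] at h2
      exact le_of_lt (lt_of_le_of_lt (le_abs_self _) h2)
    · exact ⟨1, one_pos, le_refl 1, fun h1 h2 => absurd ⟨h1, h2⟩ hk⟩
  choose δf hδpos hδle hδprop using H
  have hne : (Finset.range n).Nonempty := ⟨0, Finset.mem_range.mpr (by omega)⟩
  refine ⟨(Finset.range n).inf' hne δf, Finset.lt_inf'_iff hne |>.mpr fun k _ => hδpos k,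
    fun k hke hk2 hkn α hα1 hα2 => ?_⟩
  set δ := (Finset.range n).inf' hne δf with hδdef
  have hkmem : k ∈ Finset.range n := Finset.mem_range.mpr (by omega)
  have hδk : δ ≤ δf k := Finset.inf'_le δf hkmem
  have hαk : |α - (k : ℝ)| ≤ δf k := by
    rw [abs_le]; constructor <;> linarith
  have hF : Foff n k α ≤ ε := hδprop k hke hk2 α hαk
  have hk2' : (2 : ℝ) ≤ (k : ℝ) := by exact_mod_cast hk2
  have hα1' : (1 : ℝ) ≤ α := by
    have := hδle k; linarith
  -- the matrix
  set M := absHadamardPower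
      (Matrix.of fun i j : Fin n =>
        Real.cos (((i : ℝ) - (j : ℝ)) * Real.pi / (n : ℝ)) + (if i = j then ε else 0)) α with hMdef
  have hcsymm : ∀ i j : Fin n, cosEntry n j i = cosEntry n i j := by
    intro i j
    unfold cosEntry
    rw [show ((j : ℝ) - (i : ℝ)) * Real.pi / (n : ℝ) = -(((i : ℝ) - (j : ℝ)) * Real.pi / (n : ℝ)) by ring,
      Real.cos_neg]
  have hcdiag : ∀ i : Fin n, cosEntry n i i = 1 := by
    intro i; unfold cosEntry; simp
  have hMd : ∀ i : Fin n, M i i = (1 + ε) ^ α := by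
    intro i
    show |Real.cos (((i : ℝ) - (i : ℝ)) * Real.pi / (n : ℝ)) + (if i = i then ε else 0)| ^ α = _
    rw [if_pos rfl, show ((i : ℝ) - (i : ℝ)) * Real.pi / (n : ℝ) = 0 by ring, Real.cos_zero,
      abs_of_pos (by linarith)]
  have hMo : ∀ i j : Fin n, i ≠ j → M i j = |cosEntry n i j| ^ α := by
    intro i j hij
    show |Real.cos (((i : ℝ) - (j : ℝ)) * Real.pi / (n : ℝ)) + (if i = j then ε else 0)| ^ α = _
    rw [if_neg hij, add_zero]; rfl
  rw [Matrix.posSemidef_iff_dotProduct_mulVec]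
  constructor
  · -- Hermitian
    ext i j
    rw [Matrix.conjTranspose_apply, star_trivial]
    rcases eq_or_ne i j with rfl | hij
    · rfl
    · rw [hMo j i (Ne.symm hij), hMo i j hij, hcsymm]
  · intro x
    have hexp : star x ⬝ᵥ M.mulVec x = ∑ i, ∑ j, x i * M i j * x j := by
      simp [dotProduct, Matrix.mulVec, Finset.mul_sum, mul_assoc]
    rw [hexp]
    set E : Fin n → Fin n → ℝ := fun i j => M i j - cosEntry n i j ^ k with hEdef
    have hsplit : ∑ i, ∑ j, x i * M i j * x j
        = (∑ i, ∑ j, x i * x j * cosEntry n i j ^ k) + ∑ i, ∑ j, x i * x j * E i j := by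
      rw [← Finset.sum_add_distrib]
      refine Finset.sum_congr rfl fun i _ => ?_
      rw [← Finset.sum_add_distrib]
      refine Finset.sum_congr rfl fun j _ => ?_
      simp only [hEdef]; ring
    rw [hsplit]
    -- first sum is a Gram sum
    have hQ1 : 0 ≤ ∑ i, ∑ j, x i * x j * cosEntry n i j ^ k := by
      have hc : ∀ i j : Fin n, cosEntry n i j
          = Real.cos ((i : ℝ) * Real.pi / (n : ℝ)) * Real.cos ((j : ℝ) * Real.pi / (n : ℝ))
            + Real.sin ((i : ℝ) * Real.pi / (n : ℝ)) * Real.sin ((j : ℝ) * Real.pi / (n : ℝ)) := by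
        intro i j
        unfold cosEntry
        rw [show ((i : ℝ) - (j : ℝ)) * Real.pi / (n : ℝ)
            = (i : ℝ) * Real.pi / (n : ℝ) - (j : ℝ) * Real.pi / (n : ℝ) by ring, Real.cos_sub]
      simp only [hc]
      exact gram_nonneg k _ _ x
    -- second sum
    set S := ∑ i, x i ^ 2 with hSdef
    have hS : 0 ≤ S := Finset.sum_nonneg fun i _ => sq_nonneg _
    have hsq : ∀ i : Fin n, x i ^ 2 ≤ S :=
      fun i => Finset.single_le_sum (fun i _ => sq_nonneg (x i)) (Finset.mem_univ i)
    have hxx : ∀ i j : Fin n, |x i * x j| ≤ S := by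
      intro i j
      have h1 := hsq i; have h2 := hsq j
      have : |x i * x j| * 2 ≤ x i ^ 2 + x j ^ 2 := by
        rw [abs_mul]
        nlinarith [sq_nonneg (|x i| - |x j|), sq_abs (x i), sq_abs (x j)]
      linarith
    have hdiag : ∀ i : Fin n, ε * x i ^ 2 ≤ x i * x i * E i i := by
      intro i
      have hE : ε ≤ E i i := by
        simp only [hEdef, hMd i, hcdiag i, one_pow]
        have : (1 + ε) ^ (1 : ℝ) ≤ (1 + ε) ^ α :=
          (Real.rpow_le_rpow_left_iff (by linarith)).mpr hα1'
        rw [Real.rpow_one] at this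
        linarith
      nlinarith [sq_nonneg (x i)]
    have hoff : ∀ i : Fin n, ∀ j ∈ Finset.univ.erase i,
        -(abs (|cosEntry n i j| ^ α - cosEntry n i j ^ k) * S) ≤ x i * x j * E i j := by
      intro i j hj
      have hij : j ≠ i := Finset.ne_of_mem_erase hj
      have hEij : E i j = |cosEntry n i j| ^ α - cosEntry n i j ^ k := by
        simp only [hEdef, hMo i j (Ne.symm hij)]
      have habs : |x i * x j * E i j| ≤ |E i j| * S := by
        rw [abs_mul, mul_comm]
        exact mul_le_mul_of_nonneg_left (hxx i j) (abs_nonneg _)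
      rw [← hEij]
      have := neg_abs_le (x i * x j * E i j)
      linarith
    have hQ2 : ε * S - Foff n k α * S ≤ ∑ i, ∑ j, x i * x j * E i j := by
      have step : ∀ i : Fin n,
          ε * x i ^ 2 - (∑ j ∈ Finset.univ.erase i, abs (|cosEntry n i j| ^ α - cosEntry n i j ^ k)) * S
          ≤ ∑ j, x i * x j * E i j := by
        intro i
        rw [← Finset.add_sum_erase Finset.univ (fun j => x i * x j * E i j) (Finset.mem_univ i)]
        have h1 : -((∑ j ∈ Finset.univ.erase i, abs (|cosEntry n i j| ^ α - cosEntry n i j ^ k)) * S)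
            ≤ ∑ j ∈ Finset.univ.erase i, x i * x j * E i j := by
          rw [Finset.sum_mul, ← Finset.sum_neg_distrib]
          exact Finset.sum_le_sum (hoff i)
        have h2 := hdiag i
        linarith
      calc ε * S - Foff n k α * S
          = ∑ i, (ε * x i ^ 2
            - (∑ j ∈ Finset.univ.erase i, abs (|cosEntry n i j| ^ α - cosEntry n i j ^ k)) * S) := by
            rw [Finset.sum_sub_distrib, ← Finset.mul_sum, ← Finset.sum_mul]
            rfl
        _ ≤ _ := Finset.sum_le_sum fun i _ => step i
    have hfinal : 0 ≤ ε * S - Foff n k α * S := by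
      have : Foff n k α * S ≤ ε * S := mul_le_mul_of_nonneg_right hF hS
      linarith
    linarith
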